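/- For all fixed real numbers B, C > 1, the function A ↦ s(A, B, C) is strictly decreasing on the interval (1, 1+B+C] and strictly increasing on the interval [1+B+C, ∞). Consequently, A = 1 + B + C is the unique global minimizer of A ↦ s(A, B, C) on (1, ∞). (Sign analysis of the derivative formula of Lemma 2.1(3), used in the proof of Lemma 5.2 (lem:derivatives).) -/

import Mathlib

/-- The inverse hyperbolic cosine. -/
noncomputable def arcosh (x : ℝ) : ℝ := Real.log (x + Real.sqrt (x ^ 2 - 1))

/-- Total length of the three non-alternating sides of a right-angled hyperbolic
hexagon whose alternating sides have lengths `arcosh A`, `arcosh B`, `arcosh C`. -/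
noncomputable def s (A B C : ℝ) : ℝ :=
  arcosh ((A + B * C) / Real.sqrt ((B ^ 2 - 1) * (C ^ 2 - 1))) +
  arcosh ((B + A * C) / Real.sqrt ((A ^ 2 - 1) * (C ^ 2 - 1))) +
  arcosh ((C + A * B) / Real.sqrt ((A ^ 2 - 1) * (B ^ 2 - 1)))

lemma hasDerivAt_arcosh {x : ℝ} (hx : 1 < x) :
    HasDerivAt arcosh (1 / Real.sqrt (x ^ 2 - 1)) x := by
  have h1 : (0:ℝ) < x ^ 2 - 1 := by nlinarith
  have hs : 0 < Real.sqrt (x ^ 2 - 1) := Real.sqrt_pos.2 h1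
  have hpoly : HasDerivAt (fun y : ℝ => y ^ 2 - 1) (2 * x) x := by
    simpa using ((hasDerivAt_pow 2 x).sub_const 1)
  have hsq : HasDerivAt (fun y : ℝ => Real.sqrt (y ^ 2 - 1)) (x / Real.sqrt (x ^ 2 - 1)) x := by
    have := (Real.hasDerivAt_sqrt (ne_of_gt h1)).comp x hpoly
    refine this.congr_deriv ?_
    field_simp
  have hinner : HasDerivAt (fun y : ℝ => y + Real.sqrt (y ^ 2 - 1))
      (1 + x / Real.sqrt (x ^ 2 - 1)) x := (hasDerivAt_id x).add hsq
  have hpos : 0 < x + Real.sqrt (x ^ 2 - 1) := by positivity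
  have := hinner.log (ne_of_gt hpos)
  refine this.congr_deriv ?_
  field_simp
  ring

lemma hasDerivAt_arcosh_comp {f : ℝ → ℝ} {f' x : ℝ} (hf : HasDerivAt f f' x) (h : 1 < f x) :
    HasDerivAt (fun y => arcosh (f y)) (f' / Real.sqrt ((f x) ^ 2 - 1)) x := by
  have := (hasDerivAt_arcosh h).comp x hf
  refine this.congr_deriv ?_
  ring

-- first term: A ↦ arcosh ((A + B*C)/k) with k constant
lemma term1_deriv (B C : ℝ) (hB : 1 < B) (hC : 1 < C) {A : ℝ} (hA : 1 < A) :
    HasDerivAt (fun y => arcosh ((y + B * C) / Real.sqrt ((B ^ 2 - 1) * (C ^ 2 - 1))))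
      (1 / Real.sqrt (A ^ 2 + B ^ 2 + C ^ 2 + 2 * A * B * C - 1)) A := by
  set k := Real.sqrt ((B ^ 2 - 1) * (C ^ 2 - 1)) with hk
  have hk2 : (0:ℝ) < (B ^ 2 - 1) * (C ^ 2 - 1) :=
    mul_pos (by nlinarith) (by nlinarith)
  have hkpos : 0 < k := Real.sqrt_pos.2 hk2
  have hksq : k ^ 2 = (B ^ 2 - 1) * (C ^ 2 - 1) := Real.sq_sqrt hk2.le
  set Q := A ^ 2 + B ^ 2 + C ^ 2 + 2 * A * B * C - 1 with hQdef
  have hQpos : 0 < Q := by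
    have : (0:ℝ) < A * B * C :=
      mul_pos (mul_pos (by linarith) (by linarith)) (by linarith)
    nlinarith
  have hQs : 0 < Real.sqrt Q := Real.sqrt_pos.2 hQpos
  have hABC : 0 < A + B * C := by nlinarith
  have hgt : 1 < (A + B * C) / k := by
    rw [lt_div_iff₀ hkpos]
    nlinarith [Real.sq_sqrt hk2.le, Real.sqrt_nonneg ((B ^ 2 - 1) * (C ^ 2 - 1))]
  have hf : HasDerivAt (fun y : ℝ => (y + B * C) / k) (1 / k) A := by
    simpa using ((hasDerivAt_id A).add_const (B * C)).div_const k
  have := hasDerivAt_arcosh_comp hf hgt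
  convert this using 1
  have h1 : ((A + B * C) / k) ^ 2 - 1 = Q / k ^ 2 := by
    field_simp
    rw [hksq]; ring
  rw [h1, Real.sqrt_div hQpos.le, Real.sqrt_sq hkpos.le]
  field_simp

-- terms 2,3: A ↦ arcosh ((b + A*c)/√((A²−1)(c²−1)))
lemma term2_deriv (b c : ℝ) (hb : 1 < b) (hc : 1 < c) {A : ℝ} (hA : 1 < A) :
    HasDerivAt (fun y => arcosh ((b + y * c) / Real.sqrt ((y ^ 2 - 1) * (c ^ 2 - 1))))
      (-(A * b + c) / ((A ^ 2 - 1) * Real.sqrt (A ^ 2 + b ^ 2 + c ^ 2 + 2 * A * b * c - 1))) A := by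
  have hA2 : (0:ℝ) < A ^ 2 - 1 := by nlinarith
  have hc2 : (0:ℝ) < c ^ 2 - 1 := by nlinarith
  have hprod : (0:ℝ) < (A ^ 2 - 1) * (c ^ 2 - 1) := mul_pos hA2 hc2
  set h := Real.sqrt ((A ^ 2 - 1) * (c ^ 2 - 1)) with hh
  have hhpos : 0 < h := Real.sqrt_pos.2 hprod
  have hhsq : h ^ 2 = (A ^ 2 - 1) * (c ^ 2 - 1) := Real.sq_sqrt hprod.le
  set Q := A ^ 2 + b ^ 2 + c ^ 2 + 2 * A * b * c - 1 with hQdef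
  have hQpos : 0 < Q := by
    have : (0:ℝ) < A * b * c :=
      mul_pos (mul_pos (by linarith) (by linarith)) (by linarith)
    nlinarith
  have hQs : 0 < Real.sqrt Q := Real.sqrt_pos.2 hQpos
  have hbAc : 0 < b + A * c := by nlinarith
  -- derivative of the inner sqrt
  have hpoly : HasDerivAt (fun y : ℝ => (y ^ 2 - 1) * (c ^ 2 - 1)) (2 * A * (c ^ 2 - 1)) A := by
    have : HasDerivAt (fun y : ℝ => y ^ 2 - 1) (2 * A) A := by
      simpa using ((hasDerivAt_pow 2 A).sub_const 1)
    simpa [mul_comm, mul_assoc] using this.mul_const (c ^ 2 - 1)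
  have hsqrt : HasDerivAt (fun y : ℝ => Real.sqrt ((y ^ 2 - 1) * (c ^ 2 - 1)))
      (A * (c ^ 2 - 1) / h) A := by
    have := (Real.hasDerivAt_sqrt (ne_of_gt hprod)).comp A hpoly
    refine this.congr_deriv ?_
    rw [← hh]
    field_simp
  -- derivative of the quotient
  have hnum : HasDerivAt (fun y : ℝ => b + y * c) c A := by
    simpa using ((hasDerivAt_id A).mul_const c).const_add b
  have hquot : HasDerivAt (fun y : ℝ => (b + y * c) / Real.sqrt ((y ^ 2 - 1) * (c ^ 2 - 1)))
      ((c * h - (b + A * c) * (A * (c ^ 2 - 1) / h)) / h ^ 2) A := by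
    exact hnum.div hsqrt (ne_of_gt hhpos)
  -- the inner value is > 1
  have hgt : 1 < (b + A * c) / h := by
    rw [lt_div_iff₀ hhpos]
    nlinarith [hhsq, hhpos]
  have := hasDerivAt_arcosh_comp hquot hgt
  convert this using 1
  have h1 : ((b + A * c) / h) ^ 2 - 1 = Q / h ^ 2 := by
    field_simp
    rw [hhsq]; ring
  rw [h1, Real.sqrt_div hQpos.le, Real.sqrt_sq hhpos.le]
  have hN : c * h - (b + A * c) * (A * (c ^ 2 - 1) / h) = -((c ^ 2 - 1) * (A * b + c)) / h := by
    field_simp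
    linear_combination c * hhsq
  rw [hN]
  have h2 : -((c ^ 2 - 1) * (A * b + c)) / h / h ^ 2 / (Real.sqrt Q / h) =
      -((c ^ 2 - 1) * (A * b + c)) / (h ^ 2 * Real.sqrt Q) := by
    field_simp
  rw [h2, hhsq]
  field_simp

lemma s_hasDerivAt (B C : ℝ) (hB : 1 < B) (hC : 1 < C) {A : ℝ} (hA : 1 < A) :
    HasDerivAt (fun A => s A B C)
      ((A + 1) * (A - (1 + B + C)) /
        ((A ^ 2 - 1) * Real.sqrt (A ^ 2 + B ^ 2 + C ^ 2 + 2 * A * B * C - 1))) A := by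
  have h1 := term1_deriv B C hB hC hA
  have h2 := term2_deriv B C hB hC hA
  have h3 := term2_deriv C B hC hB hA
  have hsum := (h1.add h2).add h3
  have hfun : (fun A => s A B C) =
      (fun y => arcosh ((y + B * C) / Real.sqrt ((B ^ 2 - 1) * (C ^ 2 - 1))) +
        arcosh ((B + y * C) / Real.sqrt ((y ^ 2 - 1) * (C ^ 2 - 1))) +
        arcosh ((C + y * B) / Real.sqrt ((y ^ 2 - 1) * (B ^ 2 - 1)))) := by
    funext y; simp [s]
  rw [hfun]
  refine hsum.congr_deriv ?_
  rw [show A ^ 2 + C ^ 2 + B ^ 2 + 2 * A * C * B - 1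
      = A ^ 2 + B ^ 2 + C ^ 2 + 2 * A * B * C - 1 by ring]
  have hA2 : (0:ℝ) < A ^ 2 - 1 := by nlinarith
  have hQpos : (0:ℝ) < A ^ 2 + B ^ 2 + C ^ 2 + 2 * A * B * C - 1 := by
    have : (0:ℝ) < A * B * C :=
      mul_pos (mul_pos (by linarith) (by linarith)) (by linarith)
    nlinarith
  have hQs : 0 < Real.sqrt (A ^ 2 + B ^ 2 + C ^ 2 + 2 * A * B * C - 1) := Real.sqrt_pos.2 hQpos
  field_simp
  ring

theorem s_monotonicity_and_min (B C : ℝ) (hB : 1 < B) (hC : 1 < C) :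
    StrictAntiOn (fun A => s A B C) (Set.Ioc 1 (1 + B + C)) ∧
    StrictMonoOn (fun A => s A B C) (Set.Ici (1 + B + C)) ∧
    ∀ A, 1 < A → A ≠ 1 + B + C → s (1 + B + C) B C < s A B C := by
  have hQpos : ∀ x : ℝ, 1 < x → (0:ℝ) < x ^ 2 + B ^ 2 + C ^ 2 + 2 * x * B * C - 1 := by
    intro x hx
    have : (0:ℝ) < x * B * C :=
      mul_pos (mul_pos (by linarith) (by linarith)) (by linarith)
    nlinarith
  have hden : ∀ x : ℝ, 1 < x →
      (0:ℝ) < (x ^ 2 - 1) * Real.sqrt (x ^ 2 + B ^ 2 + C ^ 2 + 2 * x * B * C - 1) := by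
    intro x hx
    exact mul_pos (by nlinarith) (Real.sqrt_pos.2 (hQpos x hx))
  have hanti : StrictAntiOn (fun A => s A B C) (Set.Ioc 1 (1 + B + C)) := by
    apply strictAntiOn_of_deriv_neg (convex_Ioc 1 (1 + B + C))
    · intro x hx
      exact (s_hasDerivAt B C hB hC hx.1).continuousAt.continuousWithinAt
    · rw [interior_Ioc]
      intro x hx
      rw [(s_hasDerivAt B C hB hC hx.1).deriv]
      apply div_neg_of_neg_of_pos _ (hden x hx.1)
      exact mul_neg_of_pos_of_neg (by linarith [hx.1]) (by linarith [hx.2])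
  have hmono : StrictMonoOn (fun A => s A B C) (Set.Ici (1 + B + C)) := by
    apply strictMonoOn_of_deriv_pos (convex_Ici (1 + B + C))
    · intro x hx
      have hx1 : 1 < x := by
        simp only [Set.mem_Ici] at hx; linarith
      exact (s_hasDerivAt B C hB hC hx1).continuousAt.continuousWithinAt
    · rw [interior_Ici]
      intro x hx
      simp only [Set.mem_Ioi] at hx
      have hx1 : 1 < x := by linarith
      rw [(s_hasDerivAt B C hB hC hx1).deriv]
      exact div_pos (mul_pos (by linarith) (by linarith)) (hden x hx1)
  refine ⟨hanti, hmono, ?_⟩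
  intro A hA hne
  rcases lt_or_gt_of_ne hne with h | h
  · exact hanti ⟨hA, h.le⟩ ⟨by linarith, le_rfl⟩ h
  · exact hmono Set.self_mem_Ici h.le h
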